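/- arXiv:2401.05846 — 2 statements merged into one kernel-verified Lean document; each statement's English description precedes it below -/
import Mathlib

section
/- For all real numbers k₁, k₂ > 0 and d₁, d₂ < 0 there exists α₀ > 0 such that for every parameter value α ≥ α₀ the function g₁ = g₁^α satisfies: g₁^α(k₁, s₂) ≤ 0 for all s₂ ∈ [0, k₂], and g₁^α(d₁, s₂) ≥ 0 for all s₂ ∈ [d₂, 0]. -/
open Real

/-- Hypothesis (H₁) for `g₁` holds for the example vector field if the
parameter `α` is sufficiently large. -/
theorem stmt_9 (p₁ p₂ q₁ q₂ β γ : ℝ)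
    (hp₁ : 2 ≤ p₁) (hp₂ : 2 ≤ p₂) (hq₁ : 0 < q₁) (hq₂ : 0 < q₂)
    (hβ : 0 < β) (hγ : 0 < γ)
    (k₁ k₂ d₁ d₂ : ℝ) (hk₁ : 0 < k₁) (hk₂ : 0 < k₂) (hd₁ : d₁ < 0) (hd₂ : d₂ < 0) :
    ∃ α₀ > 0, ∀ α ≥ α₀,
      (∀ s₂ ∈ Set.Icc (0 : ℝ) k₂,
        -(α * (p₁ + q₁) * |k₁| ^ (p₁ + q₁ - 2) * k₁)
          + β * p₁ * (max k₁ 0) ^ (p₁ - 1) * (max s₂ 0) ^ p₂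
          + γ * p₁ * |k₁| ^ (p₁ - 2) * k₁ ≤ 0) ∧
      (∀ s₂ ∈ Set.Icc d₂ (0 : ℝ),
        0 ≤ -(α * (p₁ + q₁) * |d₁| ^ (p₁ + q₁ - 2) * d₁)
          + β * p₁ * (max d₁ 0) ^ (p₁ - 1) * (max s₂ 0) ^ p₂
          + γ * p₁ * |d₁| ^ (p₁ - 2) * d₁) := by
  have hpq : 0 < p₁ + q₁ := by linarith
  have hd₁' : 0 < |d₁| := abs_pos.mpr (ne_of_lt hd₁)
  set A : ℝ := β * p₁ * k₁ ^ (p₁ - 1) * k₂ ^ p₂ + γ * p₁ * k₁ ^ (p₁ - 2) * k₁ with hAdef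
  set D : ℝ := (p₁ + q₁) * k₁ ^ (p₁ + q₁ - 2) * k₁ with hDdef
  set B : ℝ := γ * p₁ * |d₁| ^ (p₁ - 2) * (-d₁) with hBdef
  set D' : ℝ := (p₁ + q₁) * |d₁| ^ (p₁ + q₁ - 2) * (-d₁) with hD'def
  have hA0 : 0 ≤ A := by
    have h1 : 0 ≤ β * p₁ * k₁ ^ (p₁ - 1) * k₂ ^ p₂ := by positivity
    have h2 : 0 ≤ γ * p₁ * k₁ ^ (p₁ - 2) * k₁ := by positivity
    rw [hAdef]; linarith
  have hD0 : 0 < D := by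
    rw [hDdef]
    exact mul_pos (mul_pos hpq (rpow_pos_of_pos hk₁ _)) hk₁
  have hB0 : 0 ≤ B := by
    rw [hBdef]
    have : 0 ≤ -d₁ := by linarith
    positivity
  have hD'0 : 0 < D' := by
    rw [hD'def]
    exact mul_pos (mul_pos hpq (rpow_pos_of_pos hd₁' _)) (by linarith)
  refine ⟨A / D + B / D' + 1, by positivity, fun α hα => ⟨?_, ?_⟩⟩
  · intro s₂ hs₂
    have hkey : A ≤ α * D := by
      rw [← div_le_iff₀ hD0]
      have : 0 ≤ B / D' := div_nonneg hB0 hD'0.le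
      linarith
    have hs2 : (max s₂ 0 : ℝ) ^ p₂ ≤ k₂ ^ p₂ := by
      rw [max_eq_left hs₂.1]
      exact rpow_le_rpow hs₂.1 hs₂.2 (by linarith)
    have hmul : β * p₁ * k₁ ^ (p₁ - 1) * (max s₂ 0) ^ p₂
        ≤ β * p₁ * k₁ ^ (p₁ - 1) * k₂ ^ p₂ := by
      apply mul_le_mul_of_nonneg_left hs2
      positivity
    rw [abs_of_pos hk₁, max_eq_left hk₁.le]
    rw [hAdef] at hkey
    rw [hDdef] at hkey
    nlinarith [hkey, hmul]
  · intro s₂ hs₂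
    have hkey : B ≤ α * D' := by
      rw [← div_le_iff₀ hD'0]
      have : 0 ≤ A / D := div_nonneg hA0 hD0.le
      linarith
    rw [max_eq_right hd₁.le, Real.zero_rpow (by intro h; linarith [h] : p₁ - 1 ≠ 0)]
    rw [hBdef, hD'def] at hkey
    have h0 : β * p₁ * 0 * (max s₂ 0) ^ p₂ = 0 := by ring
    nlinarith [hkey]
end

section
/- For all real numbers k₁, k₂ > 0 and d₁, d₂ < 0 there exists α₀ > 0 such that for every parameter value α ≥ α₀ the function g₂ = g₂^α satisfies: g₂^α(s₁, k₂) ≤ 0 for all s₁ ∈ [0, k₁], and g₂^α(s₁, d₂) ≥ 0 for all s₁ ∈ [d₁, 0]. -/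
open Real

lemma rpow_mul_self' (x : ℝ) (hx : 0 < x) (e : ℝ) : x ^ e * x = x ^ (e + 1) := by
  calc x ^ e * x = x ^ e * x ^ (1:ℝ) := by rw [Real.rpow_one]
    _ = x ^ (e + 1) := (Real.rpow_add hx e 1).symm

lemma rpow_split (x : ℝ) (hx : 0 < x) (a b : ℝ) :
    x ^ (a + b - 1) = x ^ (a - 1) * x ^ b := by
  rw [← Real.rpow_add hx]; congr 1; ring

/-- Hypothesis (H₁) for `g₂` holds for the example vector field if the
parameter `α` is sufficiently large. -/
theorem stmt_10 (p₁ p₂ q₁ q₂ β γ : ℝ)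
    (hp₁ : 2 ≤ p₁) (hp₂ : 2 ≤ p₂) (hq₁ : 0 < q₁) (hq₂ : 0 < q₂)
    (hβ : 0 < β) (hγ : 0 < γ)
    (k₁ k₂ d₁ d₂ : ℝ) (hk₁ : 0 < k₁) (hk₂ : 0 < k₂) (hd₁ : d₁ < 0) (hd₂ : d₂ < 0) :
    ∃ α₀ > 0, ∀ α ≥ α₀,
      (∀ s₁ ∈ Set.Icc (0 : ℝ) k₁,
        -(α * (p₂ + q₂) * |k₂| ^ (p₂ + q₂ - 2) * k₂)
          + β * p₂ * (max s₁ 0) ^ p₁ * (max k₂ 0) ^ (p₂ - 1)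
          + γ * p₂ * |k₂| ^ (p₂ - 2) * k₂ ≤ 0) ∧
      (∀ s₁ ∈ Set.Icc d₁ (0 : ℝ),
        0 ≤ -(α * (p₂ + q₂) * |d₂| ^ (p₂ + q₂ - 2) * d₂)
          + β * p₂ * (max s₁ 0) ^ p₁ * (max d₂ 0) ^ (p₂ - 1)
          + γ * p₂ * |d₂| ^ (p₂ - 2) * d₂) := by
  have hp2 : (0:ℝ) < p₂ := by linarith
  have hD : (0:ℝ) < p₂ + q₂ := by linarith
  have hkq : (0:ℝ) < k₂ ^ q₂ := Real.rpow_pos_of_pos hk₂ q₂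
  have hkp : (0:ℝ) < k₂ ^ (p₂ - 1) := Real.rpow_pos_of_pos hk₂ _
  have hdpos : (0:ℝ) < |d₂| := abs_pos.mpr (ne_of_lt hd₂)
  have hdq : (0:ℝ) < |d₂| ^ q₂ := Real.rpow_pos_of_pos hdpos q₂
  have hdp : (0:ℝ) < |d₂| ^ (p₂ - 1) := Real.rpow_pos_of_pos hdpos _
  have hk1p : (0:ℝ) < k₁ ^ p₁ := Real.rpow_pos_of_pos hk₁ p₁
  set A := (β * p₂ * k₁ ^ p₁ + γ * p₂) / ((p₂ + q₂) * k₂ ^ q₂) with hA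
  set B := (γ * p₂) / ((p₂ + q₂) * |d₂| ^ q₂) with hB
  have hApos : 0 < A := div_pos (by positivity) (by positivity)
  have hBpos : 0 < B := div_pos (by positivity) (by positivity)
  refine ⟨max A B, lt_max_of_lt_left hApos, fun α hα => ⟨?_, ?_⟩⟩
  · intro s₁ hs₁
    have hα1 : A ≤ α := le_trans (le_max_left _ _) hα
    have hαmul : β * p₂ * k₁ ^ p₁ + γ * p₂ ≤ α * ((p₂ + q₂) * k₂ ^ q₂) := by
      rw [hA, div_le_iff₀ (by positivity)] at hα1
      linarith
    have hmaxs : max s₁ 0 = s₁ := max_eq_left hs₁.1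
    have hmaxk : max k₂ 0 = k₂ := max_eq_left hk₂.le
    have habsk : |k₂| = k₂ := abs_of_pos hk₂
    have hsle : s₁ ^ p₁ ≤ k₁ ^ p₁ := Real.rpow_le_rpow hs₁.1 hs₁.2 (by linarith)
    have h1 : k₂ ^ (p₂ + q₂ - 2) * k₂ = k₂ ^ (p₂ - 1) * k₂ ^ q₂ := by
      rw [rpow_mul_self' k₂ hk₂, show p₂ + q₂ - 2 + 1 = p₂ + q₂ - 1 by ring,
        rpow_split k₂ hk₂]
    have h2 : k₂ ^ (p₂ - 2) * k₂ = k₂ ^ (p₂ - 1) := by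
      rw [rpow_mul_self' k₂ hk₂]; congr 1; ring
    rw [hmaxs, hmaxk, habsk]
    have key : (β * p₂ * k₁ ^ p₁ + γ * p₂) * k₂ ^ (p₂ - 1)
        ≤ α * ((p₂ + q₂) * k₂ ^ q₂) * k₂ ^ (p₂ - 1) :=
      mul_le_mul_of_nonneg_right hαmul hkp.le
    have hs : β * p₂ * s₁ ^ p₁ * k₂ ^ (p₂ - 1) ≤ β * p₂ * k₁ ^ p₁ * k₂ ^ (p₂ - 1) :=
      mul_le_mul_of_nonneg_right
        (mul_le_mul_of_nonneg_left hsle (by positivity)) hkp.le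
    have e1 : α * (p₂ + q₂) * k₂ ^ (p₂ + q₂ - 2) * k₂
        = α * (p₂ + q₂) * (k₂ ^ (p₂ - 1) * k₂ ^ q₂) := by
      rw [mul_assoc (α * (p₂ + q₂)), h1]
    have e2 : γ * p₂ * k₂ ^ (p₂ - 2) * k₂ = γ * p₂ * k₂ ^ (p₂ - 1) := by
      rw [mul_assoc (γ * p₂), h2]
    rw [e1, e2]
    nlinarith [key, hs]
  · intro s₁ hs₁
    have hα2 : B ≤ α := le_trans (le_max_right _ _) hα
    have hαmul : γ * p₂ ≤ α * ((p₂ + q₂) * |d₂| ^ q₂) := by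
      rw [hB, div_le_iff₀ (by positivity)] at hα2
      linarith
    have hmaxd : max d₂ 0 = 0 := max_eq_right hd₂.le
    have hzero : (0:ℝ) ^ (p₂ - 1) = 0 := Real.zero_rpow (by linarith)
    have habsd : d₂ = -|d₂| := by rw [abs_of_neg hd₂]; ring
    have h1 : |d₂| ^ (p₂ + q₂ - 2) * |d₂| = |d₂| ^ (p₂ - 1) * |d₂| ^ q₂ := by
      rw [rpow_mul_self' _ hdpos, show p₂ + q₂ - 2 + 1 = p₂ + q₂ - 1 by ring,
        rpow_split _ hdpos]
    have h2 : |d₂| ^ (p₂ - 2) * |d₂| = |d₂| ^ (p₂ - 1) := by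
      rw [rpow_mul_self' _ hdpos]; congr 1; ring
    rw [hmaxd, hzero]
    have key : γ * p₂ * |d₂| ^ (p₂ - 1)
        ≤ α * ((p₂ + q₂) * |d₂| ^ q₂) * |d₂| ^ (p₂ - 1) :=
      mul_le_mul_of_nonneg_right hαmul hdp.le
    have e0 : ∀ x : ℝ, x * d₂ = -(x * |d₂|) := fun x => by rw [← mul_neg, ← habsd]
    have e1 : α * (p₂ + q₂) * |d₂| ^ (p₂ + q₂ - 2) * d₂
        = -(α * (p₂ + q₂) * (|d₂| ^ (p₂ - 1) * |d₂| ^ q₂)) := by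
      rw [mul_assoc (α * (p₂ + q₂)), e0, h1, mul_neg]
    have e2 : γ * p₂ * |d₂| ^ (p₂ - 2) * d₂ = -(γ * p₂ * |d₂| ^ (p₂ - 1)) := by
      rw [mul_assoc (γ * p₂), e0, h2, mul_neg]
    rw [e1, e2]
    nlinarith [key]
end
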